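/- Let A be the aggregate op⟨{F₁=w₁,...,Fₙ=wₙ}⟩ ≺ N and let G be the propositional formula ⋀_{I ⊆ {1,...,n} : ¬(op({wᵢ : i∈I}) ≺ N)} ((⋀_{i∈I} Fᵢ) → (⋁_{i∈Ī} Fᵢ)), where Ī = {1,...,n} \ I. Then (a) G is classically equivalent to A, and (b) for every set X of atoms, G^X is classically equivalent to A^X. -/

import Mathlib

inductive PForm (α : Type) : Type where
  | bot : PForm α
  | atom : α → PForm α
  | and : PForm α → PForm α → PForm α
  | or : PForm α → PForm α → PForm α
  | imp : PForm α → PForm α → PForm α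

namespace PForm

variable {α : Type}

def top : PForm α := imp bot bot

def neg (F : PForm α) : PForm α := imp F bot

def sat (X : Set α) : PForm α → Prop
  | bot => False
  | atom a => a ∈ X
  | and F G => sat X F ∧ sat X G
  | or F G => sat X F ∨ sat X G
  | imp F G => sat X F → sat X G

open Classical in
noncomputable def reduct (X : Set α) : PForm α → PForm α
  | bot => bot
  | atom a => if a ∈ X then atom a else bot
  | and F G => if sat X (and F G) then and (reduct X F) (reduct X G) else bot
  | or F G => if sat X (or F G) then or (reduct X F) (reduct X G) else bot
  | imp F G => if sat X (imp F G) then imp (reduct X F) (reduct X G) else bot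

def headAtoms : PForm α → Set α
  | bot => ∅
  | atom a => {a}
  | and F G => headAtoms F ∪ headAtoms G
  | or F G => headAtoms F ∪ headAtoms G
  | imp _ G => headAtoms G

def atomsOf : PForm α → Set α
  | bot => ∅
  | atom a => {a}
  | and F G => atomsOf F ∪ atomsOf G
  | or F G => atomsOf F ∪ atomsOf G
  | imp F G => atomsOf F ∪ atomsOf G

def htSat (X Y : Set α) : PForm α → Prop
  | bot => False
  | atom a => a ∈ X
  | and F G => htSat X Y F ∧ htSat X Y G
  | or F G => htSat X Y F ∨ htSat X Y G
  | imp F G => (htSat X Y F → htSat X Y G) ∧ sat Y (imp F G)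

end PForm

variable {α : Type}

/-- Satisfaction of a theory (set of formulas). -/
def satTh (X : Set α) (Γ : Set (PForm α)) : Prop := ∀ F ∈ Γ, PForm.sat X F

/-- The reduct of a theory relative to X. -/
noncomputable def reductTh (X : Set α) (Γ : Set (PForm α)) : Set (PForm α) :=
  PForm.reduct X '' Γ

/-- X is a stable model of Γ iff X is a minimal set satisfying Γ^X. -/
def StableModel (Γ : Set (PForm α)) (X : Set α) : Prop :=
  satTh X (reductTh X Γ) ∧ ∀ Y : Set α, Y ⊂ X → ¬ satTh Y (reductTh X Γ)

def htSatTh (X Y : Set α) (Γ : Set (PForm α)) : Prop := ∀ F ∈ Γ, PForm.htSat X Y F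

def theoryHeadAtoms (Γ : Set (PForm α)) : Set α := ⋃ F ∈ Γ, PForm.headAtoms F

def listAnd : List (PForm α) → PForm α
  | [] => PForm.top
  | F :: l => PForm.and F (listAnd l)

def listOr : List (PForm α) → PForm α
  | [] => PForm.bot
  | F :: l => PForm.or F (listOr l)

noncomputable def finsetAnd {ι : Type} (s : Finset ι) (f : ι → PForm α) : PForm α :=
  listAnd (s.toList.map f)

noncomputable def finsetOr {ι : Type} (s : Finset ι) (f : ι → PForm α) : PForm α :=
  listOr (s.toList.map f)

open Classical in
/-- `satAgg X F w P` : X satisfies the aggregate op⟨{F₁=w₁,...,Fₙ=wₙ}⟩ ≺ N, where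
`P W` stands for `op(W) ≺ N`. -/
noncomputable def satAgg {n : ℕ} (X : Set α) (F : Fin n → PForm α) (w : Fin n → ℝ)
    (P : Multiset ℝ → Prop) : Prop :=
  P (Multiset.map w (Finset.filter (fun i => PForm.sat X (F i)) Finset.univ).val)

open Classical in
/-- The propositional formula corresponding to the aggregate:
⋀_{I : ¬ P(W_I)} ((⋀_{i∈I} Fᵢ) → (⋁_{i∈Ī} Fᵢ)). -/
noncomputable def aggFormula {n : ℕ} (F : Fin n → PForm α) (w : Fin n → ℝ)
    (P : Multiset ℝ → Prop) : PForm α :=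
  finsetAnd (Finset.filter (fun I : Finset (Fin n) => ¬ P (Multiset.map w I.val)) Finset.univ)
    (fun I => PForm.imp (finsetAnd I F) (finsetOr Iᶜ F))

section Aux

open PForm

theorem sat_of_sat_reduct {X Y : Set α} : ∀ G : PForm α, sat Y (reduct X G) → sat X G := by
  intro G h
  cases G with
  | bot => exact h
  | atom a =>
      simp only [reduct] at h
      split at h
      · assumption
      · exact False.elim h
  | and F G =>
      simp only [reduct] at h
      split at h
      · assumption
      · exact False.elim h
  | or F G =>
      simp only [reduct] at h
      split at h
      · assumption
      · exact False.elim h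
  | imp F G =>
      simp only [reduct] at h
      split at h
      · assumption
      · exact False.elim h

theorem sat_reduct_imp {X Y : Set α} (F G : PForm α) :
    sat Y (reduct X (PForm.imp F G)) ↔
      sat X (PForm.imp F G) ∧ (sat Y (reduct X F) → sat Y (reduct X G)) := by
  simp only [reduct]
  split <;> rename_i h
  · exact ⟨fun hh => ⟨h, hh⟩, fun hh => hh.2⟩
  · exact ⟨fun hh => False.elim hh, fun hh => absurd hh.1 h⟩

theorem sat_listAnd (X : Set α) (l : List (PForm α)) :
    sat X (listAnd l) ↔ ∀ G ∈ l, sat X G := by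
  induction l with
  | nil => simp [listAnd, PForm.top, sat]
  | cons F l ih => simp [listAnd, sat, ih]

theorem sat_listOr (X : Set α) (l : List (PForm α)) :
    sat X (listOr l) ↔ ∃ G ∈ l, sat X G := by
  induction l with
  | nil => simp [listOr, sat]
  | cons F l ih => simp [listOr, sat, ih]

theorem sat_reduct_listAnd (X Y : Set α) (l : List (PForm α)) :
    sat Y (reduct X (listAnd l)) ↔
      (∀ G ∈ l, sat X G) ∧ ∀ G ∈ l, sat Y (reduct X G) := by
  induction l with
  | nil => simp [listAnd, PForm.top, reduct, sat]
  | cons F l ih =>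
      simp only [listAnd, reduct]
      split <;> rename_i h
      · have hX : sat X F ∧ sat X (listAnd l) := h
        constructor
        · rintro ⟨h1, h2⟩
          obtain ⟨h3, h4⟩ := ih.mp h2
          refine ⟨fun G hG => ?_, fun G hG => ?_⟩
          · rcases List.mem_cons.mp hG with rfl | hG
            · exact hX.1
            · exact h3 G hG
          · rcases List.mem_cons.mp hG with rfl | hG
            · exact h1
            · exact h4 G hG
        · rintro ⟨h1, h2⟩
          refine ⟨h2 F (List.mem_cons_self), ih.mpr ⟨?_, ?_⟩⟩
          · exact fun G hG => h1 G (List.mem_cons_of_mem _ hG)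
          · exact fun G hG => h2 G (List.mem_cons_of_mem _ hG)
      · constructor
        · exact fun hf => False.elim hf
        · rintro ⟨h1, _⟩
          refine absurd (?_ : sat X F ∧ sat X (listAnd l)) h
          exact ⟨h1 F (List.mem_cons_self),
            (sat_listAnd X l).mpr (fun G hG => h1 G (List.mem_cons_of_mem _ hG))⟩

theorem sat_reduct_listOr (X Y : Set α) (l : List (PForm α)) :
    sat Y (reduct X (listOr l)) ↔
      sat X (listOr l) ∧ ∃ G ∈ l, sat Y (reduct X G) := by
  induction l with
  | nil => simp [listOr, reduct, sat]
  | cons F l ih =>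
      simp only [listOr, reduct]
      split <;> rename_i h
      · constructor
        · rintro (h1 | h1)
          · exact ⟨h, ⟨F, List.mem_cons_self, h1⟩⟩
          · obtain ⟨_, G, hG, h2⟩ := ih.mp h1
            exact ⟨h, ⟨G, List.mem_cons_of_mem _ hG, h2⟩⟩
        · rintro ⟨_, G, hG, h2⟩
          rcases List.mem_cons.mp hG with rfl | hG
          · exact Or.inl h2
          · exact Or.inr (ih.mpr ⟨(sat_listOr X l).mpr
              ⟨G, hG, sat_of_sat_reduct G h2⟩, G, hG, h2⟩)
      · exact ⟨fun hf => False.elim hf, fun hh => absurd hh.1 h⟩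

theorem sat_finsetAnd {ι : Type} (X : Set α) (s : Finset ι) (f : ι → PForm α) :
    sat X (finsetAnd s f) ↔ ∀ i ∈ s, sat X (f i) := by
  simp [finsetAnd, sat_listAnd]

theorem sat_finsetOr {ι : Type} (X : Set α) (s : Finset ι) (f : ι → PForm α) :
    sat X (finsetOr s f) ↔ ∃ i ∈ s, sat X (f i) := by
  simp [finsetOr, sat_listOr]

theorem sat_reduct_finsetAnd {ι : Type} (X Y : Set α) (s : Finset ι) (f : ι → PForm α) :
    sat Y (reduct X (finsetAnd s f)) ↔
      (∀ i ∈ s, sat X (f i)) ∧ ∀ i ∈ s, sat Y (reduct X (f i)) := by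
  simp [finsetAnd, sat_reduct_listAnd]

theorem sat_reduct_finsetOr {ι : Type} (X Y : Set α) (s : Finset ι) (f : ι → PForm α) :
    sat Y (reduct X (finsetOr s f)) ↔
      (∃ i ∈ s, sat X (f i)) ∧ ∃ i ∈ s, sat Y (reduct X (f i)) := by
  simp [finsetOr, sat_reduct_listOr, sat_listOr]

end Aux

open Classical in
/-- the formula G corresponding to an aggregate A is classically equivalent
to A, and G^X is classically equivalent to A^X (where A^X is the aggregate on the F_i^X if
X ⊨ A, and ⊥ otherwise). -/
theorem stmt13 {n : ℕ} (F : Fin n → PForm α) (w : Fin n → ℝ) (P : Multiset ℝ → Prop) :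
    (∀ X : Set α, PForm.sat X (aggFormula F w P) ↔ satAgg X F w P) ∧
    (∀ X Y : Set α,
      PForm.sat Y (PForm.reduct X (aggFormula F w P)) ↔
        (satAgg X F w P ∧
          P (Multiset.map w
            (Finset.filter (fun i => PForm.sat Y (PForm.reduct X (F i))) Finset.univ).val))) := by
  classical
  have hsatG : ∀ X : Set α, PForm.sat X (aggFormula F w P) ↔
      ∀ I : Finset (Fin n), ¬ P (Multiset.map w I.val) →
        (∀ i ∈ I, PForm.sat X (F i)) → ∃ i, i ∉ I ∧ PForm.sat X (F i) := by
    intro X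
    simp only [aggFormula, sat_finsetAnd, Finset.mem_filter, Finset.mem_univ, true_and,
      PForm.sat, sat_finsetOr, Finset.mem_compl]
  have main : ∀ X : Set α, PForm.sat X (aggFormula F w P) ↔ satAgg X F w P := by
    intro X
    rw [hsatG]
    unfold satAgg
    constructor
    · intro h
      by_contra hP
      obtain ⟨i, hiT, hi⟩ := h _ hP (fun i hi => (Finset.mem_filter.mp hi).2)
      exact hiT (Finset.mem_filter.mpr ⟨Finset.mem_univ i, hi⟩)
    · intro hP I hI hIs
      have hsub : I ⊆ Finset.filter (fun i => PForm.sat X (F i)) Finset.univ :=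
        fun i hi => Finset.mem_filter.mpr ⟨Finset.mem_univ i, hIs i hi⟩
      have hne : I ≠ Finset.filter (fun i => PForm.sat X (F i)) Finset.univ := by
        rintro rfl; exact hI hP
      obtain ⟨i, hiS, hiI⟩ := Finset.exists_of_ssubset (hsub.ssubset_of_ne hne)
      exact ⟨i, hiI, (Finset.mem_filter.mp hiS).2⟩
  refine ⟨main, fun X Y => ?_⟩
  have hred : PForm.sat Y (PForm.reduct X (aggFormula F w P)) ↔
      PForm.sat X (aggFormula F w P) ∧
      ∀ I : Finset (Fin n), ¬ P (Multiset.map w I.val) →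
        (∀ i ∈ I, PForm.sat Y (PForm.reduct X (F i))) →
        ∃ i, i ∉ I ∧ PForm.sat Y (PForm.reduct X (F i)) := by
    simp only [aggFormula, sat_reduct_finsetAnd, sat_reduct_imp, sat_reduct_finsetOr,
      sat_reduct_finsetAnd, Finset.mem_filter, Finset.mem_univ, true_and, Finset.mem_compl,
      sat_finsetAnd, PForm.sat, sat_finsetOr]
    constructor
    · rintro ⟨h1, h2⟩
      refine ⟨h1, fun I hI hIY => ?_⟩
      have hIX : ∀ i ∈ I, PForm.sat X (F i) := fun i hi =>
        sat_of_sat_reduct (F i) (hIY i hi)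
      obtain ⟨_, i, hi1, hi2⟩ := ((h2 I hI).2) ⟨hIX, hIY⟩
      exact ⟨i, hi1, hi2⟩
    · rintro ⟨h1, h2⟩
      refine ⟨h1, fun I hI => ⟨h1 I hI, ?_⟩⟩
      rintro ⟨hIX, hIY⟩
      obtain ⟨i, hi1, hi2⟩ := h2 I hI hIY
      exact ⟨⟨i, hi1, sat_of_sat_reduct (F i) hi2⟩, i, hi1, hi2⟩
  rw [hred, main]
  set T := Finset.filter (fun i => PForm.sat Y (PForm.reduct X (F i))) Finset.univ with hT
  constructor
  · rintro ⟨hA, h⟩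
    refine ⟨hA, ?_⟩
    by_contra hP
    obtain ⟨i, hiT, hi⟩ := h T hP (fun i hi => (Finset.mem_filter.mp hi).2)
    exact hiT (Finset.mem_filter.mpr ⟨Finset.mem_univ i, hi⟩)
  · rintro ⟨hA, hP⟩
    refine ⟨hA, fun I hI hIY => ?_⟩
    have hsub : I ⊆ T := fun i hi => Finset.mem_filter.mpr ⟨Finset.mem_univ i, hIY i hi⟩
    have hne : I ≠ T := by rintro rfl; exact hI hP
    obtain ⟨i, hiT, hiI⟩ := Finset.exists_of_ssubset (hsub.ssubset_of_ne hne)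
    exact ⟨i, hiI, (Finset.mem_filter.mp hiT).2⟩
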